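/- Let S be a decision rule system with n(S)>0, C ∈ {EAR, AR, EAD, AD, ESR, SR}, and α a consistent equation system over attributes of A(S) whose values lie in EV_S(a_{i_j}) for the extended problems and in V_S(a_{i_j}) for the ordinary problems. Then h_C(S) ≥ h_C(S_α). -/

import Mathlib

open scoped Classical
noncomputable section

/-- Attributes are natural numbers. -/
abbrev Attr := ℕ
/-- A value in an equation system: `some δ` is a number, `none` is the special symbol `*`. -/
abbrev Val := Option ℕ
/-- A decision rule: left-hand side (set of equations attribute = numeric value) and
right-hand side (decision). -/
abbrev Rule := Finset (Attr × ℕ) × ℕ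
/-- An equation system over attributes with possibly `*` values. -/
abbrev EqSys := Finset (Attr × Val)
/-- A decision rule system. -/
abbrev DRS := Finset Rule

/-- The equation system `K(r)` of a rule. -/
def Kr (r : Rule) : EqSys := r.1.image fun p => (p.1, some p.2)
/-- The set `A(r)` of attributes of a rule. -/
def Ar (r : Rule) : Finset Attr := r.1.image Prod.fst
/-- The length of a rule. -/
def ruleLen (r : Rule) : ℕ := r.1.card
/-- Well-formed rule: attributes in the left-hand side are pairwise different. -/
def WFRule (r : Rule) : Prop := ∀ p ∈ r.1, ∀ q ∈ r.1, p.1 = q.1 → p.2 = q.2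
/-- Well-formed decision rule system: a finite nonempty set of well-formed rules. -/
def WFS (S : DRS) : Prop := S.Nonempty ∧ ∀ r ∈ S, WFRule r

/-- `A(S)`: attributes of a system. -/
def AS (S : DRS) : Finset Attr := S.biUnion Ar
/-- `n(S) = |A(S)|`. -/
def nS (S : DRS) : ℕ := (AS S).card
/-- `d(S)`: the maximum length of a rule in `S`. -/
def dS (S : DRS) : ℕ := S.sup ruleLen
/-- `V_S(a)`: values of attribute `a` occurring in `S`. -/
def VS (S : DRS) (a : Attr) : Finset ℕ :=
  S.biUnion fun r => (r.1.filter fun p => p.1 = a).image Prod.snd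
/-- `k(S)`: maximum number of values of a single attribute. -/
def kS (S : DRS) : ℕ := (AS S).sup fun a => (VS S a).card

/-- Branching sets of o-decision trees: `V_S(a)`. -/
def Bo (S : DRS) (a : Attr) : Finset Val := (VS S a).image some
/-- Branching sets of e-decision trees: `EV_S(a) = V_S(a) ∪ {*}`. -/
def Be (S : DRS) (a : Attr) : Finset Val := insert none (Bo S a)

/-- Consistency of an equation system. -/
def Consistent (K : EqSys) : Prop := ∀ p ∈ K, ∀ q ∈ K, p.1 = q.1 → p.2 = q.2

/-- Decision trees: terminal nodes labeled with sets of rules, working nodes labeled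
with an attribute and having a child for each possible value (only children whose
labels lie in the relevant branching set are meaningful). -/
inductive DTree where
  | leaf : DRS → DTree
  | node : Attr → (Val → DTree) → DTree

/-- Depth of a decision tree with respect to branching sets `B`. -/
def depthT (B : Attr → Finset Val) : DTree → ℕ
  | .leaf _ => 0
  | .node a c => ((B a).sup fun v => depthT B (c v)) + 1

/-- A decision tree over a system `S` (with branching sets `B`). -/
def TreeOver (B : Attr → Finset Val) (S : DRS) : DTree → Prop
  | .leaf Z => Z ⊆ S
  | .node a c => a ∈ AS S ∧ ∀ v ∈ B a, TreeOver B S (c v)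

/-- `PathT B Γ K Z`: there is a complete path in `Γ` (following edges with labels
in the branching sets `B`) with equation system `K` and terminal label `Z`. -/
inductive PathT (B : Attr → Finset Val) : DTree → EqSys → DRS → Prop
  | leaf (Z : DRS) : PathT B (.leaf Z) ∅ Z
  | node (a : Attr) (c : Val → DTree) (v : Val) (K : EqSys) (Z : DRS) :
      v ∈ B a → PathT B (c v) K Z → PathT B (.node a c) (insert (a, v) K) Z

/-- `Γ` solves the problem given by correctness condition `cond` on (K(ξ), τ(ξ)). -/
def Solves (cond : EqSys → DRS → Prop) (B : Attr → Finset Val) (Γ : DTree) : Prop :=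
  ∀ K Z, PathT B Γ K Z → Consistent K → cond K Z

/-- Correctness condition for the All Rules problem. -/
def CondAR (S : DRS) (K : EqSys) (Z : DRS) : Prop :=
  (∀ r ∈ Z, Kr r ⊆ K) ∧ ∀ r ∈ S, r ∉ Z → ¬ Consistent (Kr r ∪ K)
/-- Correctness condition for the All Decisions problem. -/
def CondAD (S : DRS) (K : EqSys) (Z : DRS) : Prop :=
  (∀ r ∈ Z, Kr r ⊆ K) ∧ ∀ r ∈ S, r.2 ∉ Z.image Prod.snd → ¬ Consistent (Kr r ∪ K)
/-- Correctness condition for the Some Rules problem. -/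
def CondSR (S : DRS) (K : EqSys) (Z : DRS) : Prop :=
  (∀ r ∈ Z, Kr r ⊆ K) ∧ (Z = ∅ → ∀ r ∈ S, ¬ Consistent (Kr r ∪ K))

/-- Minimum depth of a decision tree over `S` solving the given problem. -/
def hgen (cond : DRS → EqSys → DRS → Prop) (B : DRS → Attr → Finset Val) (S : DRS) : ℕ :=
  sInf {m | ∃ Γ, TreeOver (B S) S Γ ∧ Solves (cond S) (B S) Γ ∧ depthT (B S) Γ = m}

def hAR (S : DRS) : ℕ := hgen CondAR Bo S
def hEAR (S : DRS) : ℕ := hgen CondAR Be S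
def hAD (S : DRS) : ℕ := hgen CondAD Bo S
def hEAD (S : DRS) : ℕ := hgen CondAD Be S
def hSR (S : DRS) : ℕ := hgen CondSR Bo S
def hESR (S : DRS) : ℕ := hgen CondSR Be S

/-- SR-reduced system. -/
def SRred (S : DRS) : Prop := ∀ r ∈ S, ¬ ∃ r' ∈ S, r'.1 ⊂ r.1
/-- AD-reduced system. -/
def ADred (S : DRS) : Prop := ∀ r ∈ S, ¬ ∃ r' ∈ S, r'.1 ⊂ r.1 ∧ r'.2 = r.2
/-- `R_SR(S)`. -/
def RSR (S : DRS) : DRS := S.filter fun r => ¬ ∃ r' ∈ S, r'.1 ⊂ r.1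
/-- `R_AD(S)`. -/
def RAD (S : DRS) : DRS := S.filter fun r => ¬ ∃ r' ∈ S, r'.1 ⊂ r.1 ∧ r'.2 = r.2

/-- `h_C(n,d,k)`: minimum of `h S` over systems with the given parameters. -/
def hmin (h : DRS → ℕ) (n d k : ℕ) : ℕ :=
  sInf {m | ∃ S, WFS S ∧ nS S = n ∧ dS S = d ∧ kS S = k ∧ h S = m}
/-- `H_C(n,d,k)`: maximum of `h S` over systems with the given parameters. -/
def Hmax (h : DRS → ℕ) (n d k : ℕ) : ℕ :=
  sSup {m | ∃ S, WFS S ∧ nS S = n ∧ dS S = d ∧ kS S = k ∧ h S = m}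
/-- `h_C^R(n,d,k)`: minimum of `h S` over reduced systems (`P`) with given parameters. -/
def hminR (h : DRS → ℕ) (P : DRS → Prop) (n d k : ℕ) : ℕ :=
  sInf {m | ∃ S, WFS S ∧ P S ∧ nS S = n ∧ dS S = d ∧ kS S = k ∧ h S = m}
/-- `H_C^R(n,d,k)`: maximum of `h S` over reduced systems (`P`) with given parameters. -/
def HmaxR (h : DRS → ℕ) (P : DRS → Prop) (n d k : ℕ) : ℕ :=
  sSup {m | ∃ S, WFS S ∧ P S ∧ nS S = n ∧ dS S = d ∧ kS S = k ∧ h S = m}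

/-- Node cover of the hypergraph `G(S)`. -/
def NodeCover (S : DRS) (B : Finset Attr) : Prop :=
  B ⊆ AS S ∧ ∀ r ∈ S, Ar r ≠ ∅ → (Ar r ∩ B).Nonempty
/-- `β(S)`: minimum cardinality of a node cover of `G(S)`. -/
def nodeCoverNum (S : DRS) : ℕ := sInf {m | ∃ B, NodeCover S B ∧ B.card = m}

/-- `I_SR(S)`. -/
def ISR (S : DRS) : DRS := if ∀ r ∈ S, r.1 ≠ ∅ then S else S.filter fun r => r.1 = ∅
/-- `D_0(S)`: right-hand sides of length-0 rules. -/
def D0 (S : DRS) : Finset ℕ := (S.filter fun r => r.1 = ∅).image Prod.snd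
/-- `I_AD(S)`. -/
def IAD (S : DRS) : DRS := S.filter fun r => r.1 = ∅ ∨ r.2 ∉ D0 S

/-- `K(S, δ̄)` for an assignment `f` of numeric values to all attributes of `S`. -/
def KStuple (S : DRS) (f : Attr → ℕ) : EqSys := (AS S).image fun a => (a, some (f a))
/-- An incomplete decision rule system. -/
def IncompleteS (S : DRS) : Prop :=
  ∃ f : Attr → ℕ, (∀ a ∈ AS S, f a ∈ VS S a) ∧ ∀ r ∈ S, ¬ Consistent (Kr r ∪ KStuple S f)

/-- `r_α`: remove from the left-hand side of `r` all equations belonging to `α`. -/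
def resRule (α : EqSys) (r : Rule) : Rule :=
  (r.1.filter fun p => (p.1, (some p.2 : Val)) ∉ α, r.2)
/-- `S_α`: rules `r_α` for the rules `r ∈ S` with `K(r) ∪ α` consistent. -/
def Sres (α : EqSys) (S : DRS) : DRS :=
  (S.filter fun r => Consistent (Kr r ∪ α)).image (resRule α)

/-- Value chosen at a node labeled by an attribute `a ∉ A(S_α)` when building `Γ_α`:
the `α`-value of `a` if `a` occurs in `α`, and the minimum number of `V_S(a)` otherwise. -/
def chooseVal (α : EqSys) (S : DRS) (a : Attr) : Val :=
  if h : ∃ v, (a, v) ∈ α then Classical.choose h else some (sInf {n : ℕ | n ∈ VS S a})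

/-- The decision tree `Γ_α`. -/
def resTree (α : EqSys) (S : DRS) : DTree → DTree
  | .leaf Z => .leaf (Sres α Z)
  | .node a c =>
      if a ∈ AS (Sres α S) then .node a fun v => resTree α S (c v)
      else resTree α S (c (chooseVal α S a))

/-- The o-decision tree `o(Γ)`: remove all nodes reachable only via an edge labeled `*`. -/
def oTree : DTree → DTree
  | .leaf Z => .leaf Z
  | .node a c => .node a fun v => match v with
      | none => .leaf ∅
      | some x => oTree (c (some x))

/-! ### Auxiliary lemmas -/

lemma cons_mono {T U : EqSys} (h : T ⊆ U) (hU : Consistent U) : Consistent T :=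
  fun p hp q hq => hU p (h hp) q (h hq)

lemma mem_AS_iff {S : DRS} {a : Attr} : a ∈ AS S ↔ ∃ r ∈ S, ∃ p ∈ r.1, p.1 = a := by
  simp [AS, Ar]

lemma fst_mem_Ar {r : Rule} {p : Attr × ℕ} (hp : p ∈ r.1) : p.1 ∈ Ar r :=
  Finset.mem_image_of_mem _ hp

lemma Ar_subset_AS {S : DRS} {r : Rule} (hr : r ∈ S) : Ar r ⊆ AS S :=
  Finset.subset_biUnion_of_mem _ hr

lemma mem_Kr_iff {r : Rule} {p : Attr × Val} :
    p ∈ Kr r ↔ ∃ q ∈ r.1, ((q.1, some q.2) : Attr × Val) = p := by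
  simp [Kr]

lemma fst_mem_Ar_of_mem_Kr {r : Rule} {p : Attr × Val} (hp : p ∈ Kr r) : p.1 ∈ Ar r := by
  obtain ⟨q, hq, rfl⟩ := mem_Kr_iff.1 hp
  exact fst_mem_Ar hq

lemma mem_VS_iff {S : DRS} {a : Attr} {m : ℕ} : m ∈ VS S a ↔ ∃ r ∈ S, (a, m) ∈ r.1 := by
  unfold VS
  simp only [Finset.mem_biUnion, Finset.mem_image, Finset.mem_filter]
  constructor
  · rintro ⟨r, hr, ⟨x, y⟩, ⟨hp, rfl⟩, rfl⟩
    exact ⟨r, hr, hp⟩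
  · rintro ⟨r, hr, h⟩
    exact ⟨r, hr, (a, m), ⟨h, rfl⟩, rfl⟩

lemma VS_nonempty {S : DRS} {a : Attr} (h : a ∈ AS S) : (VS S a).Nonempty := by
  obtain ⟨r, hr, p, hp, hpa⟩ := mem_AS_iff.1 h
  exact ⟨p.2, mem_VS_iff.2 ⟨r, hr, by rw [← hpa]; exact hp⟩⟩

lemma mem_Sres_iff {α : EqSys} {Z : DRS} {r' : Rule} :
    r' ∈ Sres α Z ↔ ∃ r, (r ∈ Z ∧ Consistent (Kr r ∪ α)) ∧ resRule α r = r' := by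
  simp [Sres, Finset.mem_image, Finset.mem_filter]

lemma resRule_mem_Sres {α : EqSys} {Z : DRS} {r : Rule} (hr : r ∈ Z)
    (hc : Consistent (Kr r ∪ α)) : resRule α r ∈ Sres α Z :=
  Finset.mem_image_of_mem _ (Finset.mem_filter.2 ⟨hr, hc⟩)

lemma Sres_mono {α : EqSys} {Z S : DRS} (h : Z ⊆ S) : Sres α Z ⊆ Sres α S := by
  intro r' hr'
  rw [mem_Sres_iff] at hr' ⊢
  obtain ⟨r, ⟨hr, hc⟩, hres⟩ := hr'
  exact ⟨r, ⟨h hr, hc⟩, hres⟩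

lemma VS_res_subset (α : EqSys) (S : DRS) (a : Attr) : VS (Sres α S) a ⊆ VS S a := by
  intro m hm
  rw [mem_VS_iff] at hm ⊢
  obtain ⟨r', hr', hmem⟩ := hm
  obtain ⟨r, ⟨hrS, hcr⟩, rfl⟩ := mem_Sres_iff.1 hr'
  refine ⟨r, hrS, ?_⟩
  simp only [resRule, Finset.mem_filter] at hmem
  exact hmem.1

lemma Bo_res_subset (α : EqSys) (S : DRS) (a : Attr) : Bo (Sres α S) a ⊆ Bo S a :=
  Finset.image_subset_image (VS_res_subset α S a)

lemma Be_res_subset (α : EqSys) (S : DRS) (a : Attr) : Be (Sres α S) a ⊆ Be S a :=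
  Finset.insert_subset_insert _ (Bo_res_subset α S a)

lemma Kr_resRule {α : EqSys} {r : Rule} {p : Attr × Val} :
    p ∈ Kr (resRule α r) ↔ p ∈ Kr r ∧ p ∉ α := by
  simp only [Kr, resRule, Finset.mem_image, Finset.mem_filter]
  constructor
  · rintro ⟨q, ⟨hq, hqα⟩, rfl⟩
    exact ⟨⟨q, hq, rfl⟩, hqα⟩
  · rintro ⟨⟨q, hq, rfl⟩, hα⟩
    exact ⟨q, ⟨hq, hα⟩, rfl⟩

lemma alpha_attr_not_AS_res {α : EqSys} {S : DRS} {p : Attr × Val}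
    (hmem : p ∈ α) : p.1 ∉ AS (Sres α S) := by
  obtain ⟨a, v⟩ := p
  intro ha
  obtain ⟨r', hr', q, hq, hqa⟩ := mem_AS_iff.1 ha
  obtain ⟨r, ⟨hrS, hcr⟩, rfl⟩ := mem_Sres_iff.1 hr'
  simp only [resRule, Finset.mem_filter] at hq
  have h1 : ((q.1, some q.2) : Attr × Val) ∈ Kr r ∪ α :=
    Finset.mem_union_left _ (Finset.mem_image_of_mem _ hq.1)
  have h2 : ((a, v) : Attr × Val) ∈ Kr r ∪ α := Finset.mem_union_right _ hmem
  have h3 : (some q.2 : Val) = v := hcr _ h1 _ h2 hqa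
  exact hq.2 (by rw [show q.1 = a from hqa, h3]; exact hmem)

lemma chooseVal_eq {α : EqSys} (S : DRS) (hconsα : Consistent α) {p : Attr × Val}
    (h : p ∈ α) : chooseVal α S p.1 = p.2 := by
  unfold chooseVal
  rw [dif_pos ⟨p.2, h⟩]
  exact hconsα _ (Classical.choose_spec (⟨p.2, h⟩ : ∃ w, (p.1, w) ∈ α)) _ h rfl

lemma chooseVal_mem_Bo {α : EqSys} {S : DRS} (hval : ∀ p ∈ α, p.2 ∈ Bo S p.1)
    {a : Attr} (ha : a ∈ AS S) : chooseVal α S a ∈ Bo S a := by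
  unfold chooseVal
  split_ifs with h
  · exact hval (a, Classical.choose h) (Classical.choose_spec h)
  · have hne : (VS S a).Nonempty := VS_nonempty ha
    have hmem : sInf {n : ℕ | n ∈ VS S a} ∈ VS S a :=
      Nat.sInf_mem (⟨hne.choose, hne.choose_spec⟩ : Set.Nonempty _)
    exact Finset.mem_image_of_mem _ hmem

lemma chooseVal_mem_Be {α : EqSys} {S : DRS} (hval : ∀ p ∈ α, p.2 ∈ Be S p.1)
    {a : Attr} (ha : a ∈ AS S) : chooseVal α S a ∈ Be S a := by
  unfold chooseVal
  split_ifs with h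
  · exact hval (a, Classical.choose h) (Classical.choose_spec h)
  · have hne : (VS S a).Nonempty := VS_nonempty ha
    have hmem : sInf {n : ℕ | n ∈ VS S a} ∈ VS S a :=
      Nat.sInf_mem (⟨hne.choose, hne.choose_spec⟩ : Set.Nonempty _)
    exact Finset.mem_insert_of_mem (Finset.mem_image_of_mem _ hmem)

lemma cons_of_classes {T W : EqSys} (hW : Consistent W) (f : Attr → Val) (P : Attr → Prop)
    (hWP : ∀ p ∈ W, P p.1)
    (hcls : ∀ p ∈ T, p ∈ W ∨ (¬ P p.1 ∧ p.2 = f p.1)) : Consistent T := by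
  intro p hp q hq hpq
  rcases hcls p hp with hpW | ⟨hpP, hpf⟩ <;> rcases hcls q hq with hqW | ⟨hqP, hqf⟩
  · exact hW p hpW q hqW hpq
  · exact absurd (show P q.1 by rw [← hpq]; exact hWP p hpW) hqP
  · exact absurd (show P p.1 by rw [hpq]; exact hWP q hqW) hpP
  · rw [hpf, hqf, hpq]

/-! ### The tree `Γ_α` -/

lemma resTree_over {α : EqSys} {S : DRS} {B B' : Attr → Finset Val}
    (hB : ∀ a, B' a ⊆ B a) (hch : ∀ a ∈ AS S, chooseVal α S a ∈ B a) :
    ∀ Γ : DTree, TreeOver B S Γ → TreeOver B' (Sres α S) (resTree α S Γ) := by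
  intro Γ
  induction Γ with
  | leaf Z =>
    intro h
    exact Sres_mono h
  | node a c ih =>
    intro h
    obtain ⟨ha, hc⟩ := h
    show TreeOver B' (Sres α S) (resTree α S (.node a c))
    simp only [resTree]
    split_ifs with hmem
    · exact ⟨hmem, fun v hv => ih v (hc v (hB a hv))⟩
    · exact ih _ (hc _ (hch a ha))

lemma resTree_depth {α : EqSys} {S : DRS} {B B' : Attr → Finset Val}
    (hB : ∀ a, B' a ⊆ B a) (hch : ∀ a ∈ AS S, chooseVal α S a ∈ B a) :
    ∀ Γ : DTree, TreeOver B S Γ → depthT B' (resTree α S Γ) ≤ depthT B Γ := by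
  intro Γ
  induction Γ with
  | leaf Z => intro _; simp [resTree, depthT]
  | node a c ih =>
    intro h
    obtain ⟨ha, hc⟩ := h
    simp only [resTree]
    split_ifs with hmem
    · simp only [depthT]
      exact Nat.succ_le_succ (Finset.sup_le fun v hv =>
        le_trans (ih v (hc v (hB a hv))) (Finset.le_sup (f := fun v => depthT B (c v)) (hB a hv)))
    · calc depthT B' (resTree α S (c (chooseVal α S a)))
          ≤ depthT B (c (chooseVal α S a)) := ih _ (hc _ (hch a ha))
        _ ≤ (B a).sup (fun v => depthT B (c v)) := Finset.le_sup (f := fun v => depthT B (c v)) (hch a ha)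
        _ ≤ depthT B (.node a c) := by simp only [depthT]; exact Nat.le_succ _

lemma resTree_path {α : EqSys} {S : DRS} {B B' : Attr → Finset Val}
    (hB : ∀ a, B' a ⊆ B a) (hch : ∀ a ∈ AS S, chooseVal α S a ∈ B a) :
    ∀ Γ : DTree, TreeOver B S Γ → ∀ K' Z', PathT B' (resTree α S Γ) K' Z' →
      ∃ K Z, PathT B Γ K Z ∧ Z' = Sres α Z ∧ Z ⊆ S ∧ K' ⊆ K ∧
        (∀ p ∈ K, p ∈ K' ∨ (p.1 ∉ AS (Sres α S) ∧ p.2 = chooseVal α S p.1)) ∧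
        (∀ p ∈ K', p.1 ∈ AS (Sres α S)) := by
  intro Γ
  induction Γ with
  | leaf Z =>
    intro hov K' Z' hp
    simp only [resTree] at hp
    cases hp
    exact ⟨∅, Z, PathT.leaf Z, rfl, hov, Finset.Subset.refl _, by simp, by simp⟩
  | node a c ih =>
    intro hov K' Z' hp
    obtain ⟨ha, hc⟩ := hov
    simp only [resTree] at hp
    by_cases hmem : a ∈ AS (Sres α S)
    · rw [if_pos hmem] at hp
      cases hp with
      | node _ _ v K1 _ hv hp1 =>
        obtain ⟨K, Z, hKp, hZ', hZS, hsub, hcls, hattr⟩ := ih v (hc v (hB a hv)) K1 Z' hp1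
        refine ⟨insert (a, v) K, Z, PathT.node a c v K Z (hB a hv) hKp, hZ', hZS, ?_, ?_, ?_⟩
        · exact Finset.insert_subset_insert _ hsub
        · intro p hpK
          rcases Finset.mem_insert.1 hpK with rfl | hpK
          · exact Or.inl (Finset.mem_insert_self _ _)
          · rcases hcls p hpK with h | h
            · exact Or.inl (Finset.mem_insert_of_mem h)
            · exact Or.inr h
        · intro p hpK'
          rcases Finset.mem_insert.1 hpK' with rfl | hpK'
          · exact hmem
          · exact hattr p hpK'
    · rw [if_neg hmem] at hp
      obtain ⟨K, Z, hKp, hZ', hZS, hsub, hcls, hattr⟩ := ih _ (hc _ (hch a ha)) K' Z' hp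
      refine ⟨insert (a, chooseVal α S a) K, Z,
        PathT.node a c _ K Z (hch a ha) hKp, hZ', hZS,
        hsub.trans (Finset.subset_insert _ _), ?_, hattr⟩
      intro p hpK
      rcases Finset.mem_insert.1 hpK with rfl | hpK
      · exact Or.inr ⟨hmem, rfl⟩
      · exact hcls p hpK

/-! ### A tree solving each problem (nonemptiness) -/

def fullTree (S : DRS) : List Attr → EqSys → DTree
  | [], K => .leaf (S.filter fun r => Kr r ⊆ K)
  | a :: L, K => .node a fun v => fullTree S L (insert (a, v) K)

lemma fullTree_over {S : DRS} {B : Attr → Finset Val} :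
    ∀ L : List Attr, (∀ a ∈ L, a ∈ AS S) → ∀ K0, TreeOver B S (fullTree S L K0) := by
  intro L
  induction L with
  | nil =>
    intro _ K0
    show (S.filter fun r => Kr r ⊆ K0) ⊆ S
    exact Finset.filter_subset _ _
  | cons a L ih =>
    intro h K0
    exact ⟨h a (List.mem_cons_self), fun v _ =>
      ih (fun b hb => h b (List.mem_cons_of_mem a hb)) _⟩

lemma fullTree_path {S : DRS} {B : Attr → Finset Val} :
    ∀ (L : List Attr) (K0 K : EqSys) (Z : DRS), PathT B (fullTree S L K0) K Z →
      Z = (S.filter fun r => Kr r ⊆ K ∪ K0) ∧ ∀ a ∈ L, ∃ v, (a, v) ∈ K := by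
  intro L
  induction L with
  | nil =>
    intro K0 K Z hp
    simp only [fullTree] at hp
    cases hp
    constructor
    · rw [Finset.empty_union]
    · simp
  | cons a L ih =>
    intro K0 K Z hp
    simp only [fullTree] at hp
    cases hp with
    | node _ _ v K1 _ hv hp1 =>
      obtain ⟨hZ, hcov⟩ := ih _ _ _ hp1
      constructor
      · rw [hZ, Finset.union_insert, Finset.insert_union]
      · intro b hb
        rcases List.mem_cons.1 hb with rfl | hb
        · exact ⟨v, Finset.mem_insert_self _ _⟩
        · obtain ⟨w, hw⟩ := hcov b hb
          exact ⟨w, Finset.mem_insert_of_mem hw⟩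

lemma fullTree_solves_aux {S : DRS} {B : Attr → Finset Val} {K : EqSys} {Z : DRS}
    (hp : PathT B (fullTree S (AS S).toList ∅) K Z) :
    Z = (S.filter fun r => Kr r ⊆ K) ∧
      ∀ r ∈ S, ¬ Kr r ⊆ K → ¬ Consistent (Kr r ∪ K) := by
  obtain ⟨hZ, hcov⟩ := fullTree_path _ _ _ _ hp
  rw [Finset.union_empty] at hZ
  refine ⟨hZ, ?_⟩
  intro r hr hKr hcons
  obtain ⟨p, hpKr, hpK⟩ := Finset.not_subset.1 hKr
  have hpa : p.1 ∈ AS S := Ar_subset_AS hr (fst_mem_Ar_of_mem_Kr hpKr)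
  obtain ⟨v, hv⟩ := hcov p.1 (Finset.mem_toList.2 hpa)
  have h2 : p.2 = v := hcons p (Finset.mem_union_left _ hpKr)
    (p.1, v) (Finset.mem_union_right _ hv) rfl
  apply hpK
  have hpe : p = (p.1, v) := by
    obtain ⟨x, y⟩ := p
    simpa using h2
  rw [hpe]
  exact hv

lemma fullTree_over_AS {S : DRS} {B : Attr → Finset Val} :
    TreeOver B S (fullTree S (AS S).toList ∅) :=
  fullTree_over _ (fun a ha => Finset.mem_toList.1 ha) _

lemma solvesAR {S : DRS} {B : Attr → Finset Val} :
    Solves (CondAR S) B (fullTree S (AS S).toList ∅) := by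
  intro K Z hp hcons
  obtain ⟨hZ, hbad⟩ := fullTree_solves_aux hp
  subst hZ
  constructor
  · intro r hr
    exact (Finset.mem_filter.1 hr).2
  · intro r hr hnot
    apply hbad r hr
    intro hsub
    exact hnot (Finset.mem_filter.2 ⟨hr, hsub⟩)

lemma solvesAD {S : DRS} {B : Attr → Finset Val} :
    Solves (CondAD S) B (fullTree S (AS S).toList ∅) := by
  intro K Z hp hcons
  obtain ⟨hZ, hbad⟩ := fullTree_solves_aux hp
  subst hZ
  constructor
  · intro r hr
    exact (Finset.mem_filter.1 hr).2
  · intro r hr hnot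
    apply hbad r hr
    intro hsub
    exact hnot (Finset.mem_image_of_mem _ (Finset.mem_filter.2 ⟨hr, hsub⟩))

lemma solvesSR {S : DRS} {B : Attr → Finset Val} :
    Solves (CondSR S) B (fullTree S (AS S).toList ∅) := by
  intro K Z hp hcons
  obtain ⟨hZ, hbad⟩ := fullTree_solves_aux hp
  subst hZ
  constructor
  · intro r hr
    exact (Finset.mem_filter.1 hr).2
  · intro hempty r hr
    apply hbad r hr
    intro hsub
    have : r ∈ S.filter fun r => Kr r ⊆ K := Finset.mem_filter.2 ⟨hr, hsub⟩
    rw [hempty] at this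
    exact Finset.notMem_empty _ this

/-! ### Transfer of the correctness conditions -/

lemma consKalpha {α : EqSys} {S : DRS} (hconsα : Consistent α) {K K' : EqSys}
    (hcondP : ∀ p ∈ K, p ∈ K' ∨ (p.1 ∉ AS (Sres α S) ∧ p.2 = chooseVal α S p.1))
    (hK'attr : ∀ p ∈ K', p.1 ∈ AS (Sres α S))
    (hK'cons : Consistent K') : Consistent (K ∪ α) := by
  apply cons_of_classes hK'cons (chooseVal α S) (· ∈ AS (Sres α S)) hK'attr
  intro p hp
  rcases Finset.mem_union.1 hp with hpK | hpα
  · exact hcondP p hpK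
  · exact Or.inr ⟨alpha_attr_not_AS_res hpα, (chooseVal_eq S hconsα hpα).symm⟩

lemma cons_transfer {α : EqSys} {S : DRS} (hconsα : Consistent α) {K K' : EqSys}
    (hcondP : ∀ p ∈ K, p ∈ K' ∨ (p.1 ∉ AS (Sres α S) ∧ p.2 = chooseVal α S p.1))
    (hK'attr : ∀ p ∈ K', p.1 ∈ AS (Sres α S))
    {r0 : Rule} (hr0 : r0 ∈ S) (hc0 : Consistent (Kr r0 ∪ α))
    (h : Consistent (Kr (resRule α r0) ∪ K')) :
    Consistent (Kr r0 ∪ K) := by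
  have hr' : resRule α r0 ∈ Sres α S := resRule_mem_Sres hr0 hc0
  apply cons_of_classes h (chooseVal α S) (· ∈ AS (Sres α S))
  · intro p hp
    rcases Finset.mem_union.1 hp with hp | hp
    · exact Ar_subset_AS hr' (fst_mem_Ar_of_mem_Kr hp)
    · exact hK'attr p hp
  · intro p hp
    rcases Finset.mem_union.1 hp with hp | hp
    · by_cases hpα : p ∈ α
      · exact Or.inr ⟨alpha_attr_not_AS_res hpα, (chooseVal_eq S hconsα hpα).symm⟩
      · exact Or.inl (Finset.mem_union_left _ (Kr_resRule.2 ⟨hp, hpα⟩))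
    · rcases hcondP p hp with h' | h'
      · exact Or.inl (Finset.mem_union_right _ h')
      · exact Or.inr h'

lemma part1_transfer {α : EqSys} {S : DRS} {K K' : EqSys} {Z : DRS}
    (hZS : Z ⊆ S)
    (hcondP : ∀ p ∈ K, p ∈ K' ∨ (p.1 ∉ AS (Sres α S) ∧ p.2 = chooseVal α S p.1))
    (h1 : ∀ r ∈ Z, Kr r ⊆ K) :
    ∀ r' ∈ Sres α Z, Kr r' ⊆ K' := by
  intro r' hr' p hp
  obtain ⟨r, ⟨hrZ, hcα⟩, rfl⟩ := mem_Sres_iff.1 hr'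
  have hpK : p ∈ K := h1 r hrZ (Kr_resRule.1 hp).1
  rcases hcondP p hpK with h | h
  · exact h
  · exact absurd (Ar_subset_AS (resRule_mem_Sres (hZS hrZ) hcα)
      (fst_mem_Ar_of_mem_Kr hp)) h.1

lemma condAR_transfer {α : EqSys} {S : DRS} (hconsα : Consistent α) {K K' : EqSys} {Z : DRS}
    (hZS : Z ⊆ S)
    (hcondP : ∀ p ∈ K, p ∈ K' ∨ (p.1 ∉ AS (Sres α S) ∧ p.2 = chooseVal α S p.1))
    (hK'attr : ∀ p ∈ K', p.1 ∈ AS (Sres α S))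
    (hK'cons : Consistent K')
    (hc : CondAR S K Z) : CondAR (Sres α S) K' (Sres α Z) := by
  refine ⟨part1_transfer hZS hcondP hc.1, ?_⟩
  intro r' hr' hnot hcons'
  obtain ⟨r0, ⟨hr0, hc0⟩, rfl⟩ := mem_Sres_iff.1 hr'
  have hr0Z : r0 ∉ Z := fun h => hnot (resRule_mem_Sres h hc0)
  exact hc.2 r0 hr0 hr0Z (cons_transfer hconsα hcondP hK'attr hr0 hc0 hcons')

lemma condAD_transfer {α : EqSys} {S : DRS} (hconsα : Consistent α) {K K' : EqSys} {Z : DRS}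
    (hZS : Z ⊆ S)
    (hcondP : ∀ p ∈ K, p ∈ K' ∨ (p.1 ∉ AS (Sres α S) ∧ p.2 = chooseVal α S p.1))
    (hK'attr : ∀ p ∈ K', p.1 ∈ AS (Sres α S))
    (hK'cons : Consistent K')
    (hc : CondAD S K Z) : CondAD (Sres α S) K' (Sres α Z) := by
  have hKα : Consistent (K ∪ α) := consKalpha hconsα hcondP hK'attr hK'cons
  refine ⟨part1_transfer hZS hcondP hc.1, ?_⟩
  intro r' hr' hnot hcons'
  obtain ⟨r0, ⟨hr0, hc0⟩, rfl⟩ := mem_Sres_iff.1 hr'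
  have hd : r0.2 ∉ Z.image Prod.snd := by
    intro hd
    obtain ⟨r, hrZ, hr2⟩ := Finset.mem_image.1 hd
    have hcr : Consistent (Kr r ∪ α) :=
      cons_mono (Finset.union_subset_union (hc.1 r hrZ) (Finset.Subset.refl _)) hKα
    exact hnot (Finset.mem_image.2 ⟨resRule α r, resRule_mem_Sres hrZ hcr, hr2⟩)
  exact hc.2 r0 hr0 hd (cons_transfer hconsα hcondP hK'attr hr0 hc0 hcons')

lemma condSR_transfer {α : EqSys} {S : DRS} (hconsα : Consistent α) {K K' : EqSys} {Z : DRS}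
    (hZS : Z ⊆ S)
    (hcondP : ∀ p ∈ K, p ∈ K' ∨ (p.1 ∉ AS (Sres α S) ∧ p.2 = chooseVal α S p.1))
    (hK'attr : ∀ p ∈ K', p.1 ∈ AS (Sres α S))
    (hK'cons : Consistent K')
    (hc : CondSR S K Z) : CondSR (Sres α S) K' (Sres α Z) := by
  have hKα : Consistent (K ∪ α) := consKalpha hconsα hcondP hK'attr hK'cons
  refine ⟨part1_transfer hZS hcondP hc.1, ?_⟩
  intro hempty r' hr' hcons'
  obtain ⟨r0, ⟨hr0, hc0⟩, rfl⟩ := mem_Sres_iff.1 hr'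
  have hZ : Z = ∅ := by
    rcases Finset.eq_empty_or_nonempty Z with h | ⟨r, hrZ⟩
    · exact h
    · exfalso
      have hcr : Consistent (Kr r ∪ α) :=
        cons_mono (Finset.union_subset_union (hc.1 r hrZ) (Finset.Subset.refl _)) hKα
      have hmem := resRule_mem_Sres hrZ hcr
      rw [hempty] at hmem
      exact Finset.notMem_empty _ hmem
  exact hc.2 hZ r0 hr0 (cons_transfer hconsα hcondP hK'attr hr0 hc0 hcons')

/-! ### Putting it together -/

lemma hgen_le_of (cond : DRS → EqSys → DRS → Prop) (B : DRS → Attr → Finset Val) (S T : DRS)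
    (Γ0 : DTree) (h0 : TreeOver (B S) S Γ0) (hs0 : Solves (cond S) (B S) Γ0)
    (hmap : ∀ Γ, TreeOver (B S) S Γ → Solves (cond S) (B S) Γ →
      ∃ Γ', TreeOver (B T) T Γ' ∧ Solves (cond T) (B T) Γ' ∧
        depthT (B T) Γ' ≤ depthT (B S) Γ) :
    hgen cond B T ≤ hgen cond B S := by
  have hne : {m | ∃ Γ, TreeOver (B S) S Γ ∧ Solves (cond S) (B S) Γ ∧
      depthT (B S) Γ = m}.Nonempty := ⟨_, Γ0, h0, hs0, rfl⟩
  obtain ⟨Γ, hov, hsol, hd⟩ := Nat.sInf_mem hne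
  obtain ⟨Γ', hov', hsol', hd'⟩ := hmap Γ hov hsol
  calc hgen cond B T ≤ depthT (B T) Γ' :=
        Nat.sInf_le ⟨Γ', hov', hsol', rfl⟩
    _ ≤ depthT (B S) Γ := hd'
    _ = hgen cond B S := hd

lemma main_le (cond : DRS → EqSys → DRS → Prop) (B : DRS → Attr → Finset Val)
    (α : EqSys) (S : DRS) (hconsα : Consistent α)
    (hB : ∀ a, B (Sres α S) a ⊆ B S a)
    (hch : ∀ a ∈ AS S, chooseVal α S a ∈ B S a)
    (hsolve0 : Solves (cond S) (B S) (fullTree S (AS S).toList ∅))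
    (htrans : ∀ K K' Z, Z ⊆ S →
      (∀ p ∈ K, p ∈ K' ∨ (p.1 ∉ AS (Sres α S) ∧ p.2 = chooseVal α S p.1)) →
      (∀ p ∈ K', p.1 ∈ AS (Sres α S)) → Consistent K' →
      cond S K Z → cond (Sres α S) K' (Sres α Z)) :
    hgen cond B (Sres α S) ≤ hgen cond B S := by
  apply hgen_le_of cond B S (Sres α S) _ fullTree_over_AS hsolve0
  intro Γ hov hsol
  refine ⟨resTree α S Γ, resTree_over hB hch Γ hov, ?_, resTree_depth hB hch Γ hov⟩
  intro K' Z' hp hK'cons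
  obtain ⟨K, Z, hKp, rfl, hZS, hK'K, hcondP, hK'attr⟩ := resTree_path hB hch Γ hov K' Z' hp
  have hKcons : Consistent K :=
    cons_of_classes hK'cons (chooseVal α S) (· ∈ AS (Sres α S)) hK'attr hcondP
  exact htrans K K' Z hZS hcondP hK'attr hK'cons (hsol K Z hKp hKcons)

/-- `h_C(S) ≥ h_C(S_α)` for all six problems (values of `α` from
`EV_S` for the extended problems and from `V_S` for the ordinary ones). -/
theorem stmt5 (S : DRS) (hS : WFS S) (hn : 0 < nS S)
    (α : EqSys) (hcons : Consistent α) (hattr : ∀ p ∈ α, p.1 ∈ AS S) :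
    ((∀ p ∈ α, p.2 ∈ Be S p.1) →
      hEAR (Sres α S) ≤ hEAR S ∧ hEAD (Sres α S) ≤ hEAD S ∧ hESR (Sres α S) ≤ hESR S) ∧
    ((∀ p ∈ α, p.2 ∈ Bo S p.1) →
      hAR (Sres α S) ≤ hAR S ∧ hAD (Sres α S) ≤ hAD S ∧ hSR (Sres α S) ≤ hSR S) := by
  constructor
  · intro hval
    refine ⟨?_, ?_, ?_⟩
    · exact main_le CondAR Be α S hcons (Be_res_subset α S)
        (fun a ha => chooseVal_mem_Be hval ha) solvesAR
        (fun K K' Z hZS hcondP hK'attr hK'cons hc =>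
          condAR_transfer hcons hZS hcondP hK'attr hK'cons hc)
    · exact main_le CondAD Be α S hcons (Be_res_subset α S)
        (fun a ha => chooseVal_mem_Be hval ha) solvesAD
        (fun K K' Z hZS hcondP hK'attr hK'cons hc =>
          condAD_transfer hcons hZS hcondP hK'attr hK'cons hc)
    · exact main_le CondSR Be α S hcons (Be_res_subset α S)
        (fun a ha => chooseVal_mem_Be hval ha) solvesSR
        (fun K K' Z hZS hcondP hK'attr hK'cons hc =>
          condSR_transfer hcons hZS hcondP hK'attr hK'cons hc)
  · intro hval
    refine ⟨?_, ?_, ?_⟩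
    · exact main_le CondAR Bo α S hcons (Bo_res_subset α S)
        (fun a ha => chooseVal_mem_Bo hval ha) solvesAR
        (fun K K' Z hZS hcondP hK'attr hK'cons hc =>
          condAR_transfer hcons hZS hcondP hK'attr hK'cons hc)
    · exact main_le CondAD Bo α S hcons (Bo_res_subset α S)
        (fun a ha => chooseVal_mem_Bo hval ha) solvesAD
        (fun K K' Z hZS hcondP hK'attr hK'cons hc =>
          condAD_transfer hcons hZS hcondP hK'attr hK'cons hc)
    · exact main_le CondSR Bo α S hcons (Bo_res_subset α S)
        (fun a ha => chooseVal_mem_Bo hval ha) solvesSR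
        (fun K K' Z hZS hcondP hK'attr hK'cons hc =>
          condSR_transfer hcons hZS hcondP hK'attr hK'cons hc)
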